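/- Let q be a prime power, 1 ≤ m ≤ ℓ, and let W be an m-dimensional F_q-subspace of F_{q^ℓ} satisfying (P1) τ_W ∈ F_q and (P2) L_W(L_W(α)) = 0 for all α ∈ F_{q^ℓ}. Let α*, ᾱ ∈ F_{q^ℓ} be distinct. Then there exist polynomials g_1, …, g_ℓ ∈ F_{q^ℓ}[X], each of degree q^m − 1, such that: (i) g_1(α*), …, g_ℓ(α*) form an F_q-basis of F_{q^ℓ}; (ii) g_i(ᾱ) = 0 for 1 ≤ i ≤ m; (iii) g_i(ᾱ) ∈ span_{F_q}{g_1(α*), …, g_m(α*)} for m + 1 ≤ i ≤ ℓ; and (iv) for every α ∈ F_{q^ℓ} \ {α*, ᾱ}, dim_{F_q} span_{F_q}{g_1(α), …, g_ℓ(α)} ≤ ℓ − m. -/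

import Mathlib

open scoped Classical

namespace Statement6Aux

open Polynomial Finset

variable {K F : Type*} [Field K] [Field F] [Fintype K] [Fintype F] [Algebra K F]

noncomputable def WS (W : Submodule K F) : Finset F :=
  Finset.univ.filter (fun w : F => w ∈ W)

noncomputable def Pf (W : Submodule K F) (α : F) : F := ∏ w ∈ WS W, (α - w)

lemma mem_WS {W : Submodule K F} {x : F} : x ∈ WS W ↔ x ∈ W := by
  simp [WS]

lemma Pf_coset (W : Submodule K F) {x : F} (hx : x ∈ W) (y : F) :
    Pf W (x + y) = Pf W y := by
  unfold Pf
  refine Finset.prod_nbij' (fun w => w - x) (fun v => v + x) ?_ ?_ ?_ ?_ ?_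
  · intro a ha; rw [mem_WS] at *; exact W.sub_mem ha hx
  · intro a ha; rw [mem_WS] at *; exact W.add_mem ha hx
  · intro a _; ring
  · intro a _; ring
  · intro a _; ring

lemma Pf_zero (W : Submodule K F) {x : F} (hx : x ∈ W) : Pf W x = 0 :=
  Finset.prod_eq_zero (mem_WS.mpr hx) (sub_self x)

noncomputable def LW (W : Submodule K F) : F[X] := ∏ w ∈ WS W, (X - C w)

lemma LW_eval (W : Submodule K F) (a : F) : (LW W).eval a = Pf W a := by
  simp [LW, Pf, eval_prod]

lemma LW_monic (W : Submodule K F) : (LW W).Monic :=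
  monic_prod_of_monic _ _ fun w _ => monic_X_sub_C w

lemma LW_natDegree (W : Submodule K F) : (LW W).natDegree = (WS W).card := by
  rw [LW, natDegree_prod]
  · simp
  · intro w _; exact X_sub_C_ne_zero w

lemma WS_card_pos (W : Submodule K F) : 0 < (WS W).card :=
  Finset.card_pos.mpr ⟨0, mem_WS.mpr W.zero_mem⟩

set_option linter.unusedSectionVars false

lemma Pf_add (W : Submodule K F) (x y : F) : Pf W (x + y) = Pf W x + Pf W y := by
  have hN := LW_natDegree W
  have hLm := LW_monic W
  set p : F[X] := (LW W).comp (X + C y) with hp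
  have hpm : p.Monic := hLm.comp_X_add_C y
  have hpdeg : p.natDegree = (LW W).natDegree := by
    rw [hp, natDegree_comp, natDegree_X_add_C, mul_one]
  have hpev : ∀ a : F, p.eval a = Pf W (a + y) := by
    intro a
    rw [hp, eval_comp, eval_add, eval_X, eval_C, LW_eval]
  set Q : F[X] := p - LW W - C (Pf W y) with hQ
  have hQev : ∀ a : F, Q.eval a = Pf W (a + y) - Pf W a - Pf W y := by
    intro a
    rw [hQ, eval_sub, eval_sub, eval_C, hpev, LW_eval]
  have hQ0 : Q = 0 := by
    rcases eq_or_ne Q 0 with h | h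
    · exact h
    refine eq_zero_of_natDegree_lt_card_of_eval_eq_zero' Q (WS W) ?_ ?_
    · intro w hw
      rw [hQev, Pf_coset W (mem_WS.mp hw), Pf_zero W (mem_WS.mp hw)]
      ring
    · have hsub : (p - LW W).degree < p.degree := by
        apply degree_sub_lt
        · rw [degree_eq_natDegree hpm.ne_zero, degree_eq_natDegree hLm.ne_zero, hpdeg]
        · exact hpm.ne_zero
        · rw [hpm.leadingCoeff, hLm.leadingCoeff]
      rw [degree_eq_natDegree hpm.ne_zero, hpdeg, ← degree_eq_natDegree hLm.ne_zero] at hsub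
      have hC : (C (Pf W y)).degree < (LW W).degree := by
        refine lt_of_le_of_lt degree_C_le ?_
        rw [degree_eq_natDegree hLm.ne_zero, hN]
        exact_mod_cast WS_card_pos W
      have hQL : Q.degree < (LW W).degree := lt_of_le_of_lt (degree_sub_le _ _) (max_lt hsub hC)
      rw [← hN, natDegree_lt_iff_degree_lt h, ← degree_eq_natDegree hLm.ne_zero]
      exact hQL
  have h0 := hQev x
  rw [hQ0, eval_zero] at h0
  linear_combination -h0

lemma Pf_smul (W : Submodule K F) (hcard : ∃ n : ℕ, (WS W).card = Fintype.card K ^ n)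
    (c : K) (x : F) : Pf W (c • x) = c • Pf W x := by
  rcases eq_or_ne c 0 with rfl | hc
  · rw [zero_smul, zero_smul, Pf_zero W W.zero_mem]
  have key : ∀ a : F, Pf W ((algebraMap K F c) * a) = (algebraMap K F c) * Pf W a := by
    set cf : F := algebraMap K F c with hcf
    have hcf0 : cf ≠ 0 := by
      rw [hcf]
      exact (_root_.map_ne_zero (algebraMap K F)).mpr hc
    obtain ⟨n, hn⟩ := hcard
    have hcfpow : cf ^ (WS W).card = cf := by
      rw [hn, hcf, ← map_pow, FiniteField.pow_card_pow]
    have hLm := LW_monic W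
    have hN := LW_natDegree W
    set p : F[X] := (LW W).comp (C cf * X) with hp
    have hpdeg : p.natDegree = (LW W).natDegree := by
      rw [hp, natDegree_comp, natDegree_C_mul_X cf hcf0, mul_one]
    have hplc : p.leadingCoeff = cf ^ (LW W).natDegree := by
      rw [hp, leadingCoeff_comp (by rw [natDegree_C_mul_X cf hcf0]; norm_num),
        hLm.leadingCoeff, leadingCoeff_C_mul_X, one_mul]
    have hpev : ∀ a : F, p.eval a = Pf W (cf * a) := by
      intro a; rw [hp, eval_comp, eval_mul, eval_C, eval_X, LW_eval]
    set q' : F[X] := C cf * LW W with hq'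
    have hq'deg : q'.natDegree = (LW W).natDegree := natDegree_C_mul hcf0
    have hq'lc : q'.leadingCoeff = cf := by
      rw [hq', leadingCoeff_mul, leadingCoeff_C, hLm.leadingCoeff, mul_one]
    have hq'0 : q' ≠ 0 := mul_ne_zero (by simpa using hcf0) hLm.ne_zero
    have hp0 : p ≠ 0 := by
      intro h
      rw [h, leadingCoeff_zero] at hplc
      exact pow_ne_zero _ hcf0 hplc.symm
    set Q : F[X] := p - q' with hQdef
    have hQev : ∀ a : F, Q.eval a = Pf W (cf * a) - cf * Pf W a := by
      intro a; rw [hQdef, eval_sub, hpev, hq', eval_mul, eval_C, LW_eval]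
    have hQ0 : Q = 0 := by
      rcases eq_or_ne Q 0 with h | h
      · exact h
      refine eq_zero_of_natDegree_lt_card_of_eval_eq_zero' Q (WS W) ?_ ?_
      · intro w hw
        have hwW := mem_WS.mp hw
        have h1 : Pf W (cf * w) = 0 := by
          have h2 : cf * w = c • w := (Algebra.smul_def c w).symm
          rw [h2]; exact Pf_zero W (W.smul_mem c hwW)
        rw [hQev, h1, Pf_zero W hwW, mul_zero, sub_zero]
      · have hsub : Q.degree < p.degree := by
          apply degree_sub_lt
          · rw [degree_eq_natDegree hp0, degree_eq_natDegree hq'0, hpdeg, hq'deg]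
          · exact hp0
          · rw [hplc, hq'lc, hN, hcfpow]
        rw [degree_eq_natDegree hp0, hpdeg, hN] at hsub
        rwa [natDegree_lt_iff_degree_lt h]
    intro a
    have h0 := hQev a
    rw [hQ0, eval_zero] at h0
    linear_combination -h0
  rw [Algebra.smul_def, Algebra.smul_def, key]

noncomputable def Tlin (W : Submodule K F)
    (hcard : ∃ n : ℕ, (WS W).card = Fintype.card K ^ n) : F →ₗ[K] F where
  toFun := Pf W
  map_add' := Pf_add W
  map_smul' := fun c x => by
    simpa using Pf_smul W hcard c x

lemma Pf_eq_zero_iff (W : Submodule K F) (x : F) : Pf W x = 0 ↔ x ∈ W := by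
  unfold Pf
  rw [Finset.prod_eq_zero_iff]
  constructor
  · rintro ⟨w, hw, hxw⟩
    rw [sub_eq_zero] at hxw
    rw [hxw]
    exact mem_WS.mp hw
  · intro hx
    exact ⟨x, mem_WS.mpr hx, sub_self x⟩

end Statement6Aux

open Polynomial Statement6Aux

/-- Construction II (two erasures, one-round scheme): if `W` is an `m`-dimensional
`F_q`-subspace of `F_{q^ℓ}` with `τ_W ∈ F_q` (P1) and `L_W ∘ L_W = 0` (P2), then for
distinct `α*, ᾱ` there are polynomials `g₁, …, g_ℓ` of degree `q^m − 1` such that: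
(i) the `g_i(α*)` form an `F_q`-basis of `F_{q^ℓ}`; (ii) `g_i(ᾱ) = 0` for `i ≤ m`;
(iii) `g_i(ᾱ) ∈ span_{F_q}{g_1(α*), …, g_m(α*)}` for `i > m`; and (iv) for every
`α ∉ {α*, ᾱ}` the `g_i(α)` span a subspace of dimension at most `ℓ − m`. -/
theorem statement6 {K F : Type*} [Field K] [Field F] [Fintype K] [Fintype F] [Algebra K F]
    (q ℓ m : ℕ) (hq : Fintype.card K = q) (hℓ : Module.finrank K F = ℓ)
    (hm1 : 1 ≤ m) (hmℓ : m ≤ ℓ)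
    (W : Submodule K F) (hW : Module.finrank K W = m)
    (hP1 : (∏ w ∈ Finset.univ.filter (fun w : F => w ∈ W ∧ w ≠ 0), w) ∈
      Set.range (algebraMap K F))
    (hP2 : ∀ α : F,
      (∏ w ∈ Finset.univ.filter (fun w : F => w ∈ W),
        ((∏ w' ∈ Finset.univ.filter (fun w' : F => w' ∈ W), (α - w')) - w)) = 0)
    (αs αb : F) (hne : αs ≠ αb) :
    ∃ g : Fin ℓ → Polynomial F,
      (∀ i, (g i).natDegree = q ^ m - 1) ∧
      LinearIndependent K (fun i => (g i).eval αs) ∧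
      Submodule.span K (Set.range fun i => (g i).eval αs) = ⊤ ∧
      (∀ i : Fin ℓ, (i : ℕ) < m → (g i).eval αb = 0) ∧
      (∀ i : Fin ℓ, m ≤ (i : ℕ) → (g i).eval αb ∈
        Submodule.span K {x : F | ∃ j : Fin ℓ, (j : ℕ) < m ∧ (g j).eval αs = x}) ∧
      ∀ α : F, α ≠ αs → α ≠ αb →
        Module.finrank K (Submodule.span K (Set.range fun i => (g i).eval α)) ≤ ℓ - m := by
  have hFD : FiniteDimensional K F := (Module.finite_iff_finite (R := K)).mpr inferInstance
  -- card of W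
  have hcardW : (WS W).card = q ^ m := by
    have h1 : (WS W).card = Fintype.card W := by
      rw [WS]
      exact (Fintype.card_subtype _).symm
    rw [h1, Module.card_eq_pow_finrank (K := K), hW, hq]
  -- the subspace-polynomial linear map
  set T : F →ₗ[K] F := Tlin W ⟨m, by rw [hcardW, hq]⟩ with hT
  have hTapp : ∀ x : F, T x = Pf W x := fun x => rfl
  have hker : LinearMap.ker T = W := by
    ext x
    rw [LinearMap.mem_ker, hTapp, Pf_eq_zero_iff]
  have hrank : Module.finrank K (LinearMap.range T) = ℓ - m := by
    have h := LinearMap.finrank_range_add_finrank_ker T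
    rw [hker, hW, hℓ] at h
    omega
  have hTW : ∀ x : F, T x ∈ W := by
    intro x
    have h2 := hP2 x
    rw [Finset.prod_eq_zero_iff] at h2
    obtain ⟨w, hw, hww⟩ := h2
    rw [sub_eq_zero] at hww
    have hwW : w ∈ W := (Finset.mem_filter.mp hw).2
    rw [hTapp]
    show Pf W x ∈ W
    rw [show Pf W x = w from hww]
    exact hwW
  -- the twisted subspace W'
  set d : F := αb - αs with hd'
  have hd : d ≠ 0 := sub_ne_zero_of_ne (Ne.symm hne)
  set W' : Submodule K F := Submodule.map (LinearMap.mulLeft K d⁻¹) W with hW'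
  have hinj : Function.Injective (LinearMap.mulLeft K d⁻¹) := by
    intro a b hab
    simp only [LinearMap.mulLeft_apply] at hab
    exact mul_left_cancel₀ (inv_ne_zero hd) hab
  have hW'rank : Module.finrank K W' = m := by
    rw [← hW]
    exact ((Submodule.equivMapOfInjective _ hinj W).finrank_eq).symm
  obtain ⟨U, hU⟩ := Submodule.exists_isCompl W'
  have hUrank : Module.finrank K U = ℓ - m := by
    have h := Submodule.finrank_add_eq_of_isCompl hU
    rw [hW'rank, hℓ] at h
    omega
  let bW' : Module.Basis (Fin m) K W' := Module.finBasisOfFinrankEq K W' hW'rank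
  let bU : Module.Basis (Fin (ℓ - m)) K U := Module.finBasisOfFinrankEq K U hUrank
  let B : Module.Basis (Fin m ⊕ Fin (ℓ - m)) K F :=
    (bW'.prod bU).map (Submodule.prodEquivOfIsCompl W' U hU)
  let eqv : (Fin m ⊕ Fin (ℓ - m)) ≃ Fin ℓ :=
    finSumFinEquiv.trans (finCongr (by omega))
  let Bν : Module.Basis (Fin ℓ) K F := B.reindex eqv
  set ν : Fin ℓ → F := fun i => Bν i with hν
  have hBinl : ∀ j : Fin m, B (Sum.inl j) = ((bW' j : W') : F) := by
    intro j
    simp [B, Module.Basis.map_apply, Module.Basis.prod_apply]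
  have hν0 : ∀ i, ν i ≠ 0 := fun i => Bν.ne_zero i
  have hνlt : ∀ (i : Fin ℓ) (hi : (i : ℕ) < m), ν i = ((bW' ⟨i, hi⟩ : W') : F) := by
    intro i hi
    have he : eqv (Sum.inl ⟨(i : ℕ), hi⟩) = i := by
      apply Fin.ext
      simp [eqv]
    have he' : eqv.symm i = Sum.inl ⟨(i : ℕ), hi⟩ := by
      rw [Equiv.symm_apply_eq]
      exact he.symm
    rw [hν]
    show Bν i = _
    rw [show Bν i = B (eqv.symm i) from Module.Basis.reindex_apply B eqv i, he', hBinl]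
  -- the nonzero part of W and its product
  set WS0 : Finset F := Finset.univ.filter (fun w : F => w ∈ W ∧ w ≠ 0) with hWS0
  have hWS0e : WS0 = (WS W).erase 0 := by
    ext w
    simp [hWS0, WS, Finset.mem_erase, and_comm]
  have h0mem : (0 : F) ∈ WS W := mem_WS.mpr W.zero_mem
  have hcard0 : WS0.card = q ^ m - 1 := by
    rw [hWS0e, Finset.card_erase_of_mem h0mem, hcardW]
  have hinsert : WS W = insert 0 WS0 := by
    rw [hWS0e, Finset.insert_erase h0mem]
  set c₀ : F := ∏ w ∈ WS0, (-w) with hc₀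
  have hc₀0 : c₀ ≠ 0 := by
    rw [hc₀]
    rw [Finset.prod_ne_zero_iff]
    intro w hw
    have := (Finset.mem_filter.mp (hWS0 ▸ hw)).2.2
    simpa using this
  obtain ⟨k, hk⟩ := hP1
  set k₀ : K := (-1) ^ WS0.card * k with hk₀
  have hc₀alg : c₀ = algebraMap K F k₀ := by
    have h1 : c₀ = (-1 : F) ^ WS0.card * ∏ w ∈ WS0, w := by
      rw [hc₀]
      rw [← Finset.prod_const (-1 : F), ← Finset.prod_mul_distrib]
      exact Finset.prod_congr rfl fun w _ => by ring
    rw [h1, hk₀, map_mul, map_pow, map_neg, map_one, ← hk]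
  have hk₀0 : k₀ ≠ 0 := by
    intro h
    rw [h, map_zero] at hc₀alg
    exact hc₀0 hc₀alg
  -- the polynomials
  set g : Fin ℓ → Polynomial F := fun i =>
    C (ν i) * ∏ w ∈ WS0, (C (ν i) * (X - C αs) - C w) with hg
  have heval : ∀ (i : Fin ℓ) (α : F),
      (g i).eval α = ν i * ∏ w ∈ WS0, (ν i * (α - αs) - w) := by
    intro i α
    rw [hg]
    simp [eval_prod]
  have hkey : ∀ (i : Fin ℓ) (α : F),
      (α - αs) * (g i).eval α = T (ν i * (α - αs)) := by
    intro i α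
    have hTval : T (ν i * (α - αs)) = ∏ w ∈ WS W, (ν i * (α - αs) - w) := rfl
    rw [hTval, hinsert, Finset.prod_insert (by rw [hWS0e]; exact Finset.notMem_erase _ _),
      heval, sub_zero]
    ring
  have hgαs : ∀ i : Fin ℓ, (g i).eval αs = k₀ • ν i := by
    intro i
    rw [heval, sub_self]
    rw [Finset.prod_congr rfl (fun (w : F) _ => by rw [mul_zero, zero_sub] : ∀ w ∈ WS0, ν i * (0:F) - w = -w)]
    rw [← hc₀, hc₀alg, Algebra.smul_def]
    ring
  -- conclusion
  refine ⟨g, ?_, ?_, ?_, ?_, ?_, ?_⟩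
  · -- degrees
    intro i
    have hfact : ∀ w : F, C (ν i) * (X - C αs) - C w
        = C (ν i) * X + C (-(ν i * αs) - w) := by
      intro w
      rw [map_sub, map_neg, map_mul]
      ring
    have h1 : ∀ w ∈ WS0, (C (ν i) * (X - C αs) - C w).natDegree = 1 := by
      intro w _
      rw [hfact w]
      exact natDegree_linear (hν0 i)
    have h2 : ∀ w ∈ WS0, (C (ν i) * (X - C αs) - C w) ≠ 0 := by
      intro w hw h0
      have := h1 w hw
      rw [h0] at this
      simp at this
    rw [hg]
    show (C (ν i) * ∏ w ∈ WS0, (C (ν i) * (X - C αs) - C w)).natDegree = q ^ m - 1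
    rw [natDegree_C_mul (hν0 i), natDegree_prod _ _ h2,
      Finset.sum_congr rfl h1, Finset.sum_const, smul_eq_mul, mul_one, hcard0]
  · -- linear independence at αs
    have hfun : (fun i => (g i).eval αs) = fun i => (Units.mk0 k₀ hk₀0 : K) • Bν i := by
      funext i
      rw [hgαs]
      rfl
    rw [hfun]
    exact Bν.linearIndependent.units_smul fun _ => Units.mk0 k₀ hk₀0
  · -- spanning at αs
    have hfun : (Set.range fun i => (g i).eval αs)
        = (LinearMap.lsmul K F k₀) '' Set.range Bν := by
      rw [← Set.range_comp]
      apply congrArg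
      funext i
      rw [Function.comp_apply, LinearMap.lsmul_apply, hgαs]
    rw [hfun, ← Submodule.map_span, Bν.span_eq, Submodule.map_top, LinearMap.range_eq_top]
    intro x
    exact ⟨k₀⁻¹ • x, by rw [LinearMap.lsmul_apply, smul_smul, mul_inv_cancel₀ hk₀0, one_smul]⟩
  · -- vanishing at αb for i < m
    intro i hi
    have hνW' : ν i ∈ W' := by
      rw [hνlt i hi]
      exact (bW' ⟨i, hi⟩).2
    obtain ⟨w, hwW, hwe⟩ := hνW'
    rw [LinearMap.mulLeft_apply] at hwe
    have hνd : ν i * d = w := by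
      rw [← hwe]
      field_simp
    have hT0 : T (ν i * d) = 0 := by
      rw [hνd, ← LinearMap.mem_ker, hker]
      exact hwW
    have hk2 := hkey i αb
    rw [← hd', hT0] at hk2
    rcases mul_eq_zero.mp hk2 with h | h
    · exact absurd h hd
    · exact h
  · -- value at αb in the span, for i ≥ m
    intro i _
    have hgb : (g i).eval αb = d⁻¹ * T (ν i * d) := by
      have hk2 := hkey i αb
      rw [← hd'] at hk2
      rw [← hk2]
      field_simp
    have hbasis_mem : ∀ j : Fin m, ((bW' j : W') : F) ∈
        Submodule.span K {x : F | ∃ j : Fin ℓ, (j : ℕ) < m ∧ (g j).eval αs = x} := by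
      intro j
      have hjℓ : (j : ℕ) < ℓ := lt_of_lt_of_le j.2 hmℓ
      set i' : Fin ℓ := ⟨(j : ℕ), hjℓ⟩ with hi'
      have hji : (⟨(i' : ℕ), j.2⟩ : Fin m) = j := by
        apply Fin.ext
        rfl
      have hνi : ν i' = ((bW' j : W') : F) := by
        rw [hνlt i' j.2, hji]
      have hmem : (g i').eval αs ∈
          {x : F | ∃ j : Fin ℓ, (j : ℕ) < m ∧ (g j).eval αs = x} := ⟨i', j.2, rfl⟩
      have hx : ((bW' j : W') : F) = k₀⁻¹ • ((g i').eval αs) := by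
        rw [hgαs, hνi, smul_smul, inv_mul_cancel₀ hk₀0, one_smul]
      rw [hx]
      exact Submodule.smul_mem _ _ (Submodule.subset_span hmem)
    have hW'le : W' ≤ Submodule.span K
        {x : F | ∃ j : Fin ℓ, (j : ℕ) < m ∧ (g j).eval αs = x} := by
      intro x hx
      have hsum := bW'.sum_repr ⟨x, hx⟩
      have hsum2 := congrArg (Subtype.val : W' → F) hsum
      simp only [AddSubmonoidClass.coe_finset_sum, SetLike.val_smul] at hsum2
      rw [← hsum2]
      exact Submodule.sum_mem _ fun j _ => Submodule.smul_mem _ _ (hbasis_mem j)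
    apply hW'le
    rw [hgb, hW']
    exact ⟨T (ν i * d), hTW _, rfl⟩
  · -- dimension bound at other points
    intro α hαs hαb
    have hα0 : α - αs ≠ 0 := sub_ne_zero_of_ne hαs
    have hsub : Submodule.span K (Set.range fun i => (g i).eval α)
        ≤ Submodule.map (LinearMap.mulLeft K (α - αs)⁻¹) (LinearMap.range T) := by
      rw [Submodule.span_le]
      rintro _ ⟨i, rfl⟩
      refine ⟨T (ν i * (α - αs)), LinearMap.mem_range_self _ _, ?_⟩
      rw [LinearMap.mulLeft_apply, ← hkey i α]
      field_simp
    calc Module.finrank K (Submodule.span K (Set.range fun i => (g i).eval α))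
        ≤ Module.finrank K (Submodule.map (LinearMap.mulLeft K (α - αs)⁻¹) (LinearMap.range T)) :=
          Submodule.finrank_mono hsub
      _ ≤ Module.finrank K (LinearMap.range T) := Submodule.finrank_map_le _ _
      _ = ℓ - m := hrank
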